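/- Let n ≥ 3 and let X be a set of exactly n+2 vertices of the n-cube graph Q_n. Let k := ⌊(n+2)/2⌋ and let s_1, t_1, …, s_k, t_k be 2k distinct vertices of X, arbitrarily labelled and paired. Then for at least k−1 of the indices i ∈ {1,…,k} there exists a path in Q_n from s_i to t_i none of whose inner vertices belongs to X. (This is the paper's Lemma about a facet F, a (d−1)-cube with n = d−1 ≥ 3, of a cubical d-polytope containing a set X of d+1 terminals.) -/

import Mathlib

/-- The `n`-cube graph: vertices are functions `Fin n → Bool`, two vertices
adjacent iff they differ in exactly one coordinate. -/
def cubeGraph (n : ℕ) : SimpleGraph (Fin n → Bool) where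
  Adj x y := ∃ i, x i ≠ y i ∧ ∀ j, j ≠ i → x j = y j
  symm := by
    constructor
    rintro x y ⟨i, hi, hj⟩
    exact ⟨i, fun h => hi h.symm, fun j hji => (hj j hji).symm⟩
  loopless := by
    constructor
    rintro x ⟨i, hi, -⟩
    exact hi rfl

namespace CubeAux
variable {k : ℕ}

def emb (c : Fin (k+1)) (b₀ : Bool) (v : Fin k → Bool) : Fin (k+1) → Bool :=
  Fin.insertNth (α := fun _ => Bool) c b₀ v

def red (c : Fin (k+1)) (x : Fin (k+1) → Bool) : Fin k → Bool :=
  Fin.removeNth (α := fun _ => Bool) c x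

@[simp] lemma emb_same (c : Fin (k+1)) (b₀ : Bool) (v : Fin k → Bool) :
    emb c b₀ v c = b₀ := Fin.insertNth_apply_same (α := fun _ => Bool) c b₀ v

@[simp] lemma emb_succAbove (c : Fin (k+1)) (b₀ : Bool) (v : Fin k → Bool) (j : Fin k) :
    emb c b₀ v (c.succAbove j) = v j :=
  Fin.insertNth_apply_succAbove (α := fun _ => Bool) c b₀ v j

@[simp] lemma red_emb (c : Fin (k+1)) (b₀ : Bool) (v : Fin k → Bool) :
    red c (emb c b₀ v) = v :=
  Fin.removeNth_insertNth (α := fun _ => Bool) c b₀ v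

lemma emb_red (c : Fin (k+1)) (x : Fin (k+1) → Bool) :
    emb c (x c) (red c x) = x :=
  Fin.insertNth_self_removeNth (α := fun _ => Bool) c x

/-- The embedding of the `k`-cube as the `b₀`-half (coordinate `c`) of the
`(k+1)`-cube, as a graph homomorphism. -/
def embHom (c : Fin (k+1)) (b₀ : Bool) : cubeGraph k →g cubeGraph (k+1) where
  toFun := emb c b₀
  map_rel' := by
    rintro x y ⟨i, hi, hj⟩
    refine ⟨c.succAbove i, by simpa using hi, fun j hj' => ?_⟩
    rcases eq_or_ne j c with rfl | hc
    · simp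
    · obtain ⟨j', rfl⟩ := Fin.exists_succAbove_eq hc
      have : j' ≠ i := fun h' => hj' (by rw [h'])
      simp [hj j' this]

@[simp] lemma embHom_apply (c : Fin (k+1)) (b₀ : Bool) (v : Fin k → Bool) :
    embHom c b₀ v = emb c b₀ v := rfl

lemma cross_adj (c : Fin (k+1)) (v : Fin k → Bool) :
    (cubeGraph (k+1)).Adj (emb c false v) (emb c true v) := by
  refine ⟨c, by simp, fun j hj => ?_⟩
  obtain ⟨j', rfl⟩ := Fin.exists_succAbove_eq hj
  simp

end CubeAux

namespace CubeAux

/-- Walks avoiding a vertex set entirely. -/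
def Avoid (n : ℕ) (Y : Finset (Fin n → Bool)) (a b : Fin n → Bool) : Prop :=
  ∃ p : (cubeGraph n).Walk a b, ∀ v ∈ p.support, v ∉ Y

lemma Avoid.refl {n Y} {a : Fin n → Bool} (ha : a ∉ Y) : Avoid n Y a a :=
  ⟨SimpleGraph.Walk.nil, by simp [ha]⟩

lemma Avoid.of_adj {n Y} {a b : Fin n → Bool} (h : (cubeGraph n).Adj a b)
    (ha : a ∉ Y) (hb : b ∉ Y) : Avoid n Y a b :=
  ⟨SimpleGraph.Walk.cons h SimpleGraph.Walk.nil, by simp [ha, hb]⟩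

lemma Avoid.trans {n Y} {a b c : Fin n → Bool} (h1 : Avoid n Y a b)
    (h2 : Avoid n Y b c) : Avoid n Y a c := by
  obtain ⟨p, hp⟩ := h1; obtain ⟨q, hq⟩ := h2
  refine ⟨p.append q, fun v hv => ?_⟩
  rw [SimpleGraph.Walk.mem_support_append_iff] at hv
  exact hv.elim (hp v) (hq v)

lemma Avoid.symm {n Y} {a b : Fin n → Bool} (h : Avoid n Y a b) : Avoid n Y b a := by
  obtain ⟨p, hp⟩ := h
  exact ⟨p.reverse, fun v hv => hp v (by simpa [SimpleGraph.Walk.support_reverse] using hv)⟩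

lemma adj_update {n : ℕ} (x : Fin n → Bool) (i : Fin n) :
    (cubeGraph n).Adj x (Function.update x i (!x i)) := by
  refine ⟨i, ?_, fun j hj => ?_⟩
  · simp
  · simp [Function.update_of_ne hj]

lemma adj_update' {n : ℕ} (x : Fin n → Bool) (i : Fin n) {v : Bool} (h : x i ≠ v) :
    (cubeGraph n).Adj x (Function.update x i v) := by
  have : v = !x i := by revert h; cases x i <;> cases v <;> simp
  rw [this]; exact adj_update x i

/-- The cube with nothing removed is connected. -/
lemma avoid_empty_aux {n : ℕ} (s : Finset (Fin n)) :
    ∀ a b : Fin n → Bool, (∀ j, j ∉ s → a j = b j) → Avoid n ∅ a b := by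
  induction s using Finset.induction with
  | empty =>
    intro a b h
    have : a = b := funext fun j => h j (by simp)
    subst this; exact Avoid.refl (by simp)
  | @insert i s' hi ih =>
    intro a b h
    by_cases hab : a i = b i
    · exact ih a b fun j hj => by
        rcases eq_or_ne j i with rfl | hne
        · exact hab
        · exact h j (by simp [hj, hne])
    · refine (Avoid.of_adj (adj_update' a i hab) (by simp) (by simp)).trans
        (ih _ b fun j hj => ?_)
      rcases eq_or_ne j i with rfl | hne
      · simp
      · rw [Function.update_of_ne hne]; exact h j (by simp [hj, hne])

lemma avoid_empty {n : ℕ} (a b : Fin n → Bool) : Avoid n ∅ a b :=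
  avoid_empty_aux Finset.univ a b (fun j hj => absurd (Finset.mem_univ j) hj)

lemma exists_cross {k : ℕ} (c : Fin (k+1)) (Y : Finset (Fin (k+1) → Bool))
    (hY : Y.card < 2 ^ k) :
    ∃ v : Fin k → Bool, emb c false v ∉ Y ∧ emb c true v ∉ Y := by
  have hcard : (Y.image (red c)).card < Fintype.card (Fin k → Bool) := by
    calc (Y.image (red c)).card ≤ Y.card := Finset.card_image_le
    _ < 2 ^ k := hY
    _ = Fintype.card (Fin k → Bool) := by simp [Fintype.card_fun]
  obtain ⟨v, hv⟩ : ∃ v, v ∉ Y.image (red c) := by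
    by_contra h
    push_neg at h
    have := Finset.card_le_card (fun v _ => h v : Finset.univ ⊆ Y.image (red c))
    simp only [Finset.card_univ] at this
    omega
  refine ⟨v, fun h => hv ?_, fun h => hv ?_⟩
  · exact Finset.mem_image.2 ⟨_, h, by simp⟩
  · exact Finset.mem_image.2 ⟨_, h, by simp⟩

lemma half_connect {k : ℕ} (c : Fin (k+1)) (b₀ : Bool) (Y : Finset (Fin (k+1) → Bool))
    (Ak : ∀ Z : Finset (Fin k → Bool), Z.card < k →
      ∀ a b, a ∉ Z → b ∉ Z → Avoid k Z a b)
    (hcard : (Y.filter (fun x => x c = b₀)).card < k)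
    {a b : Fin (k+1) → Bool} (ha : a ∉ Y) (hb : b ∉ Y)
    (hac : a c = b₀) (hbc : b c = b₀) :
    Avoid (k+1) Y a b := by
  set Z := (Y.filter (fun x => x c = b₀)).image (red c) with hZ
  have hZcard : Z.card < k := lt_of_le_of_lt Finset.card_image_le hcard
  have hmem : ∀ x : Fin (k+1) → Bool, x c = b₀ → x ∉ Y → red c x ∉ Z := by
    intro x hx hxY hmemZ
    obtain ⟨y, hy, hyx⟩ := Finset.mem_image.1 hmemZ
    obtain ⟨hyY, hyc⟩ := Finset.mem_filter.1 hy
    have : y = x := by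
      rw [← emb_red c y, ← emb_red c x, hyc, hx, hyx]
    exact hxY (this ▸ hyY)
  obtain ⟨p, hp⟩ := Ak Z hZcard (red c a) (red c b) (hmem a hac ha) (hmem b hbc hb)
  have h1 : emb c b₀ (red c a) = a := by rw [← hac]; exact emb_red c a
  have h2 : emb c b₀ (red c b) = b := by rw [← hbc]; exact emb_red c b
  refine ⟨(p.map (embHom c b₀)).copy h1 h2, fun v hv => ?_⟩
  replace hv : v ∈ (p.map (embHom c b₀)).support := by
    rw [← SimpleGraph.Walk.support_copy (p.map (embHom c b₀)) h1 h2]; exact hv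
  rw [SimpleGraph.Walk.support_map] at hv
  obtain ⟨u, hu, rfl⟩ := List.mem_map.1 hv
  intro hY'
  have : embHom c b₀ u ∈ Y.filter (fun x => x c = b₀) :=
    Finset.mem_filter.2 ⟨hY', by simp⟩
  have h3 : red c (emb c b₀ u) = u := red_emb c b₀ u
  exact hp u hu (Finset.mem_image.2 ⟨_, this, h3⟩)

end CubeAux

namespace CubeAux

lemma filter_card_split {k : ℕ} (c : Fin (k+1)) (Y : Finset (Fin (k+1) → Bool)) :
    (Y.filter (fun x => x c = false)).card + (Y.filter (fun x => x c = true)).card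
      = Y.card := by
  have h := Finset.card_filter_add_card_filter_not
    (s := Y) (p := fun x => x c = false)
  rw [← h]
  have h2 : Y.filter (fun a => ¬ a c = false) = Y.filter (fun x => x c = true) := by
    apply Finset.filter_congr
    intro x _
    cases hx : x c <;> simp
  rw [h2]

/-- Removing fewer than `m` vertices from the `m`-cube leaves it connected. -/
theorem cube_A : ∀ (m : ℕ) (Y : Finset (Fin m → Bool)), Y.card < m →
    ∀ a b : Fin m → Bool, a ∉ Y → b ∉ Y → Avoid m Y a b := by
  intro m
  induction m with
  | zero => intro Y h; omega
  | succ k ih =>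
    intro Y hY a b ha hb
    by_cases hcst : ∃ y ∈ Y, ∃ y' ∈ Y, ∃ c, y c ≠ y' c
    · obtain ⟨y, hy, y', hy', c, hc⟩ := hcst
      -- both halves at `c` contain an element of `Y`
      have hne : ∀ v : Bool, ∃ z ∈ Y, z c = v := by
        intro v
        by_cases hv : v = y c
        · exact ⟨y, hy, hv.symm⟩
        · have : v = y' c := by revert hv hc; cases v <;> cases hyc : y c <;> cases hy'c : y' c <;> simp
          exact ⟨y', hy', this.symm⟩
      have hpos : ∀ v : Bool, 1 ≤ (Y.filter (fun x => x c = v)).card := by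
        intro v
        obtain ⟨z, hz, hzc⟩ := hne v
        exact Finset.card_pos.2 ⟨z, Finset.mem_filter.2 ⟨hz, hzc⟩⟩
      have hsum := filter_card_split c Y
      have hside : ∀ v : Bool, (Y.filter (fun x => x c = v)).card < k := by
        intro v
        have h0 := hpos false
        have h1 := hpos true
        cases v
        · generalize (Y.filter (fun x => x c = false)).card = p at *
          generalize (Y.filter (fun x => x c = true)).card = q at *
          omega
        · generalize (Y.filter (fun x => x c = false)).card = p at *
          generalize (Y.filter (fun x => x c = true)).card = q at *
          omega
      by_cases hab : a c = b c
      · exact half_connect c (a c) Y ih (hside (a c)) ha hb rfl hab.symm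
      · obtain ⟨v, hv0, hv1⟩ := exists_cross c Y
          (lt_of_le_of_lt (Nat.le_of_lt_succ hY) (Nat.lt_two_pow_self))
        have key : ∀ w : Bool, emb c w v ∉ Y := by intro w; cases w <;> assumption
        have adj01 : (cubeGraph (k+1)).Adj (emb c (a c) v) (emb c (b c) v) := by
          rcases Bool.eq_false_or_eq_true (a c) with h1 | h1 <;> rw [h1] <;>
            rw [h1] at hab <;> rcases Bool.eq_false_or_eq_true (b c) with h2 | h2 <;>
              rw [h2] <;> simp [h2] at hab <;>
                first
                  | exact cross_adj c v
                  | exact (cross_adj c v).symm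
        refine ((half_connect c (a c) Y ih (hside (a c)) ha (key (a c)) rfl (by simp)).trans
          (Avoid.of_adj adj01 (key (a c)) (key (b c)))).trans
          (half_connect c (b c) Y ih (hside (b c)) (key (b c)) hb (by simp) rfl)
    · -- all removed vertices are equal: `Y.card ≤ 1`
      push_neg at hcst
      have hY1 : Y.card ≤ 1 := Finset.card_le_one.2 fun x hx y' hy' =>
        funext fun c => hcst x hx y' hy' c
      rcases Finset.card_le_one_iff_subset_singleton.1 hY1 with ⟨y, hsub⟩
      rcases Finset.eq_empty_or_nonempty Y with rfl | hYne
      · exact avoid_empty a b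
      · have hYy : Y = {y} := by
          apply Finset.eq_of_subset_of_card_le hsub
          simpa using Finset.card_pos.2 hYne
        subst hYy
        have hcard1 : ({y} : Finset (Fin (k+1) → Bool)).card = 1 := Finset.card_singleton y
        have hk : 1 ≤ k := by
          rcases Nat.eq_zero_or_pos k with rfl | h
          · exfalso; omega
          · exact h
        set c : Fin (k+1) := 0
        set b₁ : Bool := !(y c) with hb₁
        have step : ∀ x : Fin (k+1) → Bool, x ∉ ({y} : Finset _) →
            ∃ g, g c = b₁ ∧ g ∉ ({y} : Finset _) ∧ Avoid (k+1) {y} x g := by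
          intro x hx
          by_cases hxc : x c = b₁
          · exact ⟨x, hxc, hx, Avoid.refl hx⟩
          · have hxy : x c = y c := by
              revert hxc; rw [hb₁]; cases x c <;> cases y c <;> simp
            refine ⟨Function.update x c b₁, by simp, ?_, ?_⟩
            · intro hmem
              have : Function.update x c b₁ c = y c := by
                rw [Finset.mem_singleton.1 hmem]
              rw [Function.update_self] at this
              rw [hb₁] at this
              cases y c <;> simp_all
            · refine Avoid.of_adj (adj_update' x c (by rw [hxy, hb₁]; cases y c <;> simp))
                hx ?_
              intro hmem
              have : Function.update x c b₁ c = y c := by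
                rw [Finset.mem_singleton.1 hmem]
              rw [Function.update_self] at this
              rw [hb₁] at this
              cases y c <;> simp_all
        obtain ⟨g, hgc, hgY, hag⟩ := step a ha
        obtain ⟨h, hhc, hhY, hbh⟩ := step b hb
        refine (hag.trans ?_).trans hbh.symm
        refine half_connect c b₁ {y} ih ?_ hgY hhY hgc hhc
        have hyc : ¬ (y c = b₁) := by rw [hb₁]; cases y c <;> simp
        rw [Finset.filter_singleton, if_neg hyc]
        simpa using Nat.lt_of_lt_of_le Nat.zero_lt_one hk

end CubeAux

namespace CubeAux

lemma lt_two_pow_pred {n : ℕ} (hn : 3 ≤ n) : n < 2 ^ (n - 1) := by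
  induction n with
  | zero => omega
  | succ m ih =>
    rcases Nat.lt_or_ge m 3 with h | h
    · interval_cases m <;> simp_all <;> omega
    · have := ih (by omega)
      have h2 : 2 ^ (m - 1) ≥ 1 := Nat.one_le_two_pow
      have : 2 ^ (m + 1 - 1) = 2 * 2 ^ (m - 1) := by
        rw [← pow_succ']
        congr 1
        omega
      omega

/-- Main connectivity lemma: removing `≤ n` vertices from the `n`-cube
(`n ≥ 3`), any two remaining vertices that each still have a neighbour
outside the removed set are joined by a path avoiding the removed set. -/
theorem cube_B (n : ℕ) (hn : 3 ≤ n) (Y : Finset (Fin n → Bool)) (hY : Y.card ≤ n)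
    (a b : Fin n → Bool) (ha : a ∉ Y) (hb : b ∉ Y)
    (ha' : ∃ a', (cubeGraph n).Adj a a' ∧ a' ∉ Y)
    (hb' : ∃ b', (cubeGraph n).Adj b b' ∧ b' ∉ Y) :
    Avoid n Y a b := by
  rcases Nat.lt_or_ge Y.card n with hlt | hge
  · exact cube_A n Y hlt a b ha hb
  have hYn : Y.card = n := le_antisymm hY hge
  clear hY hge
  -- `Y` is not constant in some coordinate
  obtain ⟨k, rfl⟩ : ∃ k, n = k + 1 := ⟨n - 1, by omega⟩
  have hk : 2 ≤ k := by omega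
  have hcst : ∃ y ∈ Y, ∃ y' ∈ Y, ∃ c, y c ≠ y' c := by
    by_contra hcon
    push_neg at hcon
    have : Y.card ≤ 1 := Finset.card_le_one.2 fun x hx y' hy' =>
      funext fun c => hcon x hx y' hy' c
    omega
  obtain ⟨y0, hy0, y0', hy0', c, hc⟩ := hcst
  have hne : ∀ v : Bool, ∃ z ∈ Y, z c = v := by
    intro v
    by_cases hv : v = y0 c
    · exact ⟨y0, hy0, hv.symm⟩
    · have : v = y0' c := by
        revert hv hc; cases v <;> cases hyc : y0 c <;> cases hy'c : y0' c <;> simp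
      exact ⟨y0', hy0', this.symm⟩
  have hpos : ∀ v : Bool, 1 ≤ (Y.filter (fun x => x c = v)).card := by
    intro v
    obtain ⟨z, hz, hzc⟩ := hne v
    exact Finset.card_pos.2 ⟨z, Finset.mem_filter.2 ⟨hz, hzc⟩⟩
  have hsum := filter_card_split c Y
  -- the two main cases
  by_cases hbig : ∀ v : Bool, (Y.filter (fun x => x c = v)).card < k
  · -- Case 1: both sides of the split miss at most `k - 1` vertices of `Y`
    by_cases hab : a c = b c
    · exact half_connect c (a c) Y (cube_A k) (hbig (a c)) ha hb rfl hab.symm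
    · obtain ⟨v, hv0, hv1⟩ := exists_cross c Y (by
        have h1 := lt_two_pow_pred hn
        have h2 : (2:ℕ) ^ (k + 1 - 1) = 2 ^ k := by rw [Nat.add_sub_cancel]
        rw [hYn, ← h2]; exact h1)
      have key : ∀ w : Bool, emb c w v ∉ Y := by intro w; cases w <;> assumption
      have adj01 : (cubeGraph (k+1)).Adj (emb c (a c) v) (emb c (b c) v) := by
        rcases Bool.eq_false_or_eq_true (a c) with h1 | h1 <;> rw [h1] <;>
          rw [h1] at hab <;> rcases Bool.eq_false_or_eq_true (b c) with h2 | h2 <;>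
            rw [h2] <;> simp [h2] at hab <;>
              first
                | exact cross_adj c v
                | exact (cross_adj c v).symm
      refine ((half_connect c (a c) Y (cube_A k) (hbig (a c)) ha (key (a c)) rfl
        (by simp)).trans (Avoid.of_adj adj01 (key (a c)) (key (b c)))).trans
        (half_connect c (b c) Y (cube_A k) (hbig (b c)) (key (b c)) hb (by simp) rfl)
  · -- Case 2: one side contains all but one vertex of `Y`
    push_neg at hbig
    obtain ⟨v₁, hv₁⟩ := hbig
    -- the small side is the `!v₁` side, and it is a single vertex `y`
    have hsmall : (Y.filter (fun x => x c = !v₁)).card = 1 := by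
      have h0 := hpos false
      have h1 := hpos true
      cases v₁ <;>
        · simp only [Bool.not_false, Bool.not_true] at *
          generalize (Y.filter (fun x => x c = false)).card = p at *
          generalize (Y.filter (fun x => x c = true)).card = q at *
          omega
    set b₀ : Bool := !v₁ with hb₀
    obtain ⟨y, hyeq⟩ := Finset.card_eq_one.1 hsmall
    have hyY : y ∈ Y ∧ y c = b₀ := by
      have : y ∈ Y.filter (fun x => x c = b₀) := hyeq ▸ Finset.mem_singleton_self y
      exact ⟨(Finset.mem_filter.1 this).1, (Finset.mem_filter.1 this).2⟩
    -- any vertex outside `Y` with an escape neighbour can reach the `b₀` side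
    have step : ∀ x : Fin (k+1) → Bool, x ∉ Y →
        (∃ x', (cubeGraph (k+1)).Adj x x' ∧ x' ∉ Y) →
        ∃ g, g c = b₀ ∧ g ∉ Y ∧ Avoid (k+1) Y x g := by
      intro x hx hx'
      by_cases hxc : x c = b₀
      · exact ⟨x, hxc, hx, Avoid.refl hx⟩
      · -- `x` is on the big side
        have hmem_side : ∀ z : Fin (k+1) → Bool, z c = b₀ → z ≠ y → z ∉ Y := by
          intro z hzc hzy hzY
          exact hzy (Finset.mem_singleton.1
            (hyeq ▸ Finset.mem_filter.2 ⟨hzY, hzc⟩))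
        by_cases hxy : Function.update x c b₀ = y
        · -- the direct crossing of `x` is blocked by `y`; use the escape neighbour
          obtain ⟨x', hadj, hx'Y⟩ := hx'
          have hx'c : x' c ≠ b₀ := by
            intro hx'c
            apply hx'Y
            have hxx'eq : x' = Function.update x c b₀ := by
              obtain ⟨i, hi, hj⟩ := hadj
              have hic : i = c := by
                by_contra hic
                have h3 : x c = x' c := hj c fun h => hic h.symm
                exact hxc (h3.trans hx'c)
              subst hic
              funext j
              rcases eq_or_ne j i with rfl | hne2
              · rw [Function.update_self, hx'c]
              · rw [Function.update_of_ne hne2]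
                exact (hj j hne2).symm
            rw [hxx'eq, hxy]; exact hyY.1
          have hadj' : (cubeGraph (k+1)).Adj x' (Function.update x' c b₀) :=
            adj_update' x' c hx'c
          have hne' : Function.update x' c b₀ ≠ y := by
            intro heq
            have hxx' : x = x' := by
              have h1 : Function.update x c b₀ = Function.update x' c b₀ :=
                hxy.trans heq.symm
              funext j
              rcases eq_or_ne j c with rfl | hj
              · have hxj : x j ≠ b₀ := hxc
                have hx'j : x' j ≠ b₀ := hx'c
                revert hxj hx'j; cases x j <;> cases x' j <;> cases b₀ <;> simp
              · have := congrFun h1 j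
                rwa [Function.update_of_ne hj, Function.update_of_ne hj] at this
            exact (cubeGraph (k+1)).loopless.irrefl x (hxx' ▸ hadj)
          have hgood : Function.update x' c b₀ ∉ Y :=
            hmem_side _ (Function.update_self c b₀ x') hne'
          exact ⟨Function.update x' c b₀, Function.update_self c b₀ x',
            hgood, (Avoid.of_adj hadj hx hx'Y).trans
              (Avoid.of_adj hadj' hx'Y hgood)⟩
        · have hadj : (cubeGraph (k+1)).Adj x (Function.update x c b₀) :=
            adj_update' x c hxc
          have hgood : Function.update x c b₀ ∉ Y :=
            hmem_side _ (Function.update_self c b₀ x) hxy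
          exact ⟨Function.update x c b₀, Function.update_self c b₀ x, hgood,
            Avoid.of_adj hadj hx hgood⟩
    obtain ⟨g, hgc, hgY, hag⟩ := step a ha ha'
    obtain ⟨h, hhc, hhY, hbh⟩ := step b hb hb'
    refine (hag.trans ?_).trans hbh.symm
    refine half_connect c b₀ Y (cube_A k) ?_ hgY hhY hgc hhc
    rw [hsmall]
    exact hk

end CubeAux

namespace CubeAux

lemma eq_update_of_adj {n : ℕ} {x y : Fin n → Bool} (h : (cubeGraph n).Adj x y) :
    ∃ i, y = Function.update x i (!x i) := by
  obtain ⟨i, hi, hj⟩ := h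
  refine ⟨i, funext fun j => ?_⟩
  rcases eq_or_ne j i with rfl | hne
  · rw [Function.update_self]
    revert hi; cases x j <;> cases y j <;> simp
  · rw [Function.update_of_ne hne]; exact (hj j hne).symm

def par {n : ℕ} (x : Fin n → Bool) : ZMod 2 := ∑ j, if x j then 1 else 0

lemma par_adj {n : ℕ} {x y : Fin n → Bool} (h : (cubeGraph n).Adj x y) :
    par x + par y = 1 := by
  obtain ⟨i, hi, hj⟩ := h
  rw [par, par, ← Finset.sum_add_distrib]
  rw [Finset.sum_eq_single i]
  · revert hi; cases x i <;> cases y i <;> simp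
  · intro j _ hne
    rw [hj j hne]; cases y j <;> decide
  · intro hmem; exact absurd (Finset.mem_univ i) hmem

lemma triangle_free {n : ℕ} {x y z : Fin n → Bool}
    (h1 : (cubeGraph n).Adj x y) (h2 : (cubeGraph n).Adj x z)
    (h3 : (cubeGraph n).Adj y z) : False := by
  have key : ∀ u v w : ZMod 2, u + v = 1 → u + w = 1 → v + w = 1 → False := by decide
  exact key _ _ _ (par_adj h1) (par_adj h2) (par_adj h3)

noncomputable def nbhd (n : ℕ) (w : Fin n → Bool) : Finset (Fin n → Bool) :=
  @Finset.filter _ ((cubeGraph n).Adj w) (Classical.decPred _) Finset.univ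

lemma mem_nbhd {n : ℕ} {w u : Fin n → Bool} :
    u ∈ nbhd n w ↔ (cubeGraph n).Adj w u := by
  classical
  simp [nbhd]

lemma card_nbhd {n : ℕ} (w : Fin n → Bool) : (nbhd n w).card = n := by
  have himg : nbhd n w = Finset.univ.image (fun i => Function.update w i (!w i)) := by
    ext u
    rw [mem_nbhd, Finset.mem_image]
    constructor
    · intro h
      obtain ⟨i, rfl⟩ := eq_update_of_adj h
      exact ⟨i, Finset.mem_univ i, rfl⟩
    · rintro ⟨i, -, rfl⟩
      exact adj_update w i
  rw [himg, Finset.card_image_of_injective _ ?_, Finset.card_univ, Fintype.card_fin]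
  intro i j hij
  by_contra hne
  have hij' : Function.update w i (!w i) = Function.update w j (!w j) := hij
  have h1 := congrFun hij' i
  rw [Function.update_self, Function.update_of_ne (Ne.symm fun h => hne h.symm)] at h1
  revert h1; cases w i <;> simp

end CubeAux


open CubeAux in
/-- Let `X` be a set of exactly `n + 2` vertices of the `n`-cube (`n ≥ 3`),
`k := ⌊(n+2)/2⌋`, and let `s 0, t 0, …, s (k-1), t (k-1)` be `2k` distinct
vertices of `X`, arbitrarily labelled and paired. Then for at least `k - 1`
of the indices `i` there is a path in the `n`-cube from `s i` to `t i` none of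
whose inner vertices lies in `X`. -/
theorem cube_short_distance (n : ℕ) (hn : 3 ≤ n)
    (X : Finset (Fin n → Bool)) (hX : X.card = n + 2)
    (s t : Fin ((n + 2) / 2) → (Fin n → Bool))
    (hinj : Function.Injective (Sum.elim s t))
    (hs : ∀ i, s i ∈ X) (ht : ∀ i, t i ∈ X) :
    ∃ S : Finset (Fin ((n + 2) / 2)), (n + 2) / 2 - 1 ≤ S.card ∧
      ∀ i ∈ S, ∃ p : (cubeGraph n).Walk (s i) (t i), p.IsPath ∧
        ∀ v ∈ p.support, v ∈ X → v = s i ∨ v = t i := by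
  classical
  set S : Finset (Fin ((n + 2) / 2)) := Finset.univ.filter
    (fun i => ∃ p : (cubeGraph n).Walk (s i) (t i), p.IsPath ∧
      ∀ v ∈ p.support, v ∈ X → v = s i ∨ v = t i) with hSdef
  refine ⟨S, ?_, fun i hi => (Finset.mem_filter.1 hi).2⟩
  -- distinctness of the terminals
  have hst_ne : ∀ i j, s i ≠ t j := by
    intro i j h
    have := hinj (show Sum.elim s t (Sum.inl i) = Sum.elim s t (Sum.inr j) from h)
    simp at this
  have hss_ne : ∀ i j, i ≠ j → s i ≠ s j := by
    intro i j hij h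
    have := hinj (show Sum.elim s t (Sum.inl i) = Sum.elim s t (Sum.inl j) from h)
    simp at this; exact hij this
  have htt_ne : ∀ i j, i ≠ j → t i ≠ t j := by
    intro i j hij h
    have := hinj (show Sum.elim s t (Sum.inr i) = Sum.elim s t (Sum.inr j) from h)
    simp at this; exact hij this
  -- a failing index has a "buried" endpoint
  have key : ∀ i, i ∉ S → ∃ w, (w = s i ∨ w = t i) ∧
      nbhd n w = X \ ({s i, t i} : Finset _) := by
    intro i hiS
    by_contra hcon
    push_neg at hcon
    set Y : Finset (Fin n → Bool) := X \ ({s i, t i} : Finset _) with hY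
    have hpair : ({s i, t i} : Finset (Fin n → Bool)) ⊆ X := by
      intro v hv
      rcases Finset.mem_insert.1 hv with rfl | hv
      · exact hs i
      · rw [Finset.mem_singleton.1 hv]; exact ht i
    have hpair2 : ({s i, t i} : Finset (Fin n → Bool)).card = 2 := by
      rw [Finset.card_insert_of_notMem (by simp [hst_ne i i]), Finset.card_singleton]
    have hYcard : Y.card = n := by
      rw [hY, Finset.card_sdiff_of_subset hpair, hX, hpair2]
      omega
    have hsY : s i ∉ Y := by simp [hY]
    have htY : t i ∉ Y := by simp [hY]
    have hesc : ∀ w, (w = s i ∨ w = t i) →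
        ∃ w', (cubeGraph n).Adj w w' ∧ w' ∉ Y := by
      intro w hw
      by_contra hbr
      push_neg at hbr
      refine hcon w hw (Finset.eq_of_subset_of_card_le ?_ ?_)
      · intro u hu
        exact hbr u (mem_nbhd.1 hu)
      · rw [hYcard, card_nbhd]
    obtain ⟨p, hp⟩ := cube_B n hn Y hYcard.le (s i) (t i) hsY htY
      (hesc _ (Or.inl rfl)) (hesc _ (Or.inr rfl))
    refine hiS (Finset.mem_filter.2 ⟨Finset.mem_univ i, p.toPath.1, p.toPath.2,
      fun v hv hvX => ?_⟩)
    have hvY : v ∉ Y := hp v (SimpleGraph.Walk.support_toPath_subset p hv)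
    rw [hY, Finset.mem_sdiff] at hvY
    push_neg at hvY
    have := hvY hvX
    simpa using this
  -- at most one index can fail
  have once : ∀ i j, i ∉ S → j ∉ S → i = j := by
    intro i j hiS hjS
    by_contra hij
    obtain ⟨wi, hwi, hNi⟩ := key i hiS
    obtain ⟨wj, hwj, hNj⟩ := key j hjS
    have hwjX : wj ∈ X := by rcases hwj with rfl | rfl; exacts [hs j, ht j]
    have hwiX : wi ∈ X := by rcases hwi with rfl | rfl; exacts [hs i, ht i]
    have hwj_ne : wj ≠ s i ∧ wj ≠ t i := by
      rcases hwj with rfl | rfl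
      · exact ⟨hss_ne j i (Ne.symm hij), fun h => hst_ne j i h⟩
      · exact ⟨fun h => hst_ne i j h.symm, htt_ne j i (Ne.symm hij)⟩
    have hadjij : (cubeGraph n).Adj wi wj := by
      rw [← mem_nbhd, hNi, Finset.mem_sdiff]
      exact ⟨hwjX, by simp [hwj_ne.1, hwj_ne.2]⟩
    have hsubX : nbhd n wi ∪ nbhd n wj ⊆ X := by
      rw [hNi, hNj]
      intro u hu
      rcases Finset.mem_union.1 hu with hu | hu <;>
        exact (Finset.mem_sdiff.1 hu).1
    have hinter : 0 < ((nbhd n wi) ∩ (nbhd n wj)).card := by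
      have h1 := Finset.card_inter_add_card_union (nbhd n wi) (nbhd n wj)
      have h2 : (nbhd n wi ∪ nbhd n wj).card ≤ n + 2 := hX ▸ Finset.card_le_card hsubX
      have h3 := card_nbhd wi
      have h4 := card_nbhd wj
      generalize ((nbhd n wi) ∩ (nbhd n wj)).card = p at *
      generalize ((nbhd n wi) ∪ (nbhd n wj)).card = q at *
      omega
    obtain ⟨u, hu⟩ := Finset.card_pos.1 hinter
    rw [Finset.mem_inter, mem_nbhd, mem_nbhd] at hu
    exact triangle_free hadjij hu.1 hu.2
  have hcompl : Sᶜ.card ≤ 1 :=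
    Finset.card_le_one.2 fun i hi j hj =>
      once i j (Finset.mem_compl.1 hi) (Finset.mem_compl.1 hj)
  have hcc : Sᶜ.card = Fintype.card (Fin ((n + 2) / 2)) - S.card := Finset.card_compl S
  have hcard_le : S.card ≤ (n + 2) / 2 := by
    have := Finset.card_le_univ S
    simpa using this
  rw [Fintype.card_fin] at hcc
  omega
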